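/- For any graph G on n vertices, φ(G) ≤ n/3. -/
import Mathlib


open SimpleGraph

noncomputable def chi {W : Type*} (G : SimpleGraph W) : ℕ := G.chromaticNumber.toNat

def IsProper {W : Type*} (G : SimpleGraph W) (c : W → ℕ) : Prop :=
  ∀ ⦃u v⦄, G.Adj u v → c u ≠ c v

noncomputable def disc {W : Type*} (G : SimpleGraph W) (c : W → ℕ) (s : Finset W) : ℕ :=
  (s.image c).card - chi (G.induce (s : Set W))

noncomputable def phiC {W : Type*} [Fintype W] (G : SimpleGraph W) (c : W → ℕ) : ℕ :=
  Finset.univ.sup (disc G c)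

noncomputable def phi {W : Type*} [Fintype W] (G : SimpleGraph W) : ℕ :=
  sInf {n | ∃ c, IsProper G c ∧ phiC G c = n}

open Classical in
noncomputable def phiHatC {W : Type*} [Fintype W] (G : SimpleGraph W) (c : W → ℕ) : ℕ :=
  Finset.univ.sup (fun s : Finset W =>
    if (G.induce (s : Set W)).Connected then disc G c s else 0)

noncomputable def phiHat {W : Type*} [Fintype W] (G : SimpleGraph W) : ℕ :=
  sInf {n | ∃ c, IsProper G c ∧ phiHatC G c = n}

open Classical in
noncomputable def indepNum' {W : Type*} [Fintype W] (G : SimpleGraph W) : ℕ :=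
  Finset.univ.sup fun s : Finset W =>
    if ∀ u ∈ s, ∀ v ∈ s, ¬ G.Adj u v then s.card else 0

open Classical in
noncomputable def cliqueNum' {W : Type*} [Fintype W] (G : SimpleGraph W) : ℕ :=
  Finset.univ.sup fun s : Finset W =>
    if G.IsClique (s : Set W) then s.card else 0

section Aux

variable {V : Type*}

private lemma chi_colorable {W : Type*} [Finite W] (G : SimpleGraph W) : G.Colorable (chi G) :=
  G.colorable_chromaticNumber_of_fintype

private lemma chi_le_of_colorable {W : Type*} {G : SimpleGraph W} {n : ℕ}
    (h : G.Colorable n) : chi G ≤ n :=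
  ENat.toNat_le_of_le_coe h.chromaticNumber_le

private lemma chi_mono (G : SimpleGraph V) {s' s : Finset V} (h : s' ⊆ s) :
    chi (G.induce (s' : Set V)) ≤ chi (G.induce (s : Set V)) := by
  obtain ⟨C⟩ := chi_colorable (G.induce (s : Set V))
  exact chi_le_of_colorable ⟨SimpleGraph.Coloring.mk
    (fun v => C ⟨v.1, h v.2⟩) (fun {a b} hab => C.valid hab)⟩

private lemma clique_le_chi (G : SimpleGraph V) {s W : Finset V} (hWs : W ⊆ s)
    (hW : ∀ u ∈ W, ∀ v ∈ W, u ≠ v → G.Adj u v) :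
    W.card ≤ chi (G.induce (s : Set V)) := by
  classical
  obtain ⟨C⟩ := chi_colorable (G.induce (s : Set V))
  rcases W.eq_empty_or_nonempty with rfl | ⟨w0, hw0⟩
  · simp
  set k := chi (G.induce (s : Set V)) with hk
  have hw0s : (w0 : V) ∈ (s : Set V) := hWs hw0
  let f : V → Fin k := fun v => if hv : v ∈ (s : Set V) then C ⟨v, hv⟩ else C ⟨w0, hw0s⟩
  have hle : W.card ≤ (Finset.univ : Finset (Fin k)).card := by
    apply Finset.card_le_card_of_injOn f (fun _ _ => Finset.mem_univ _)
    intro a ha b hb hfab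
    by_contra hne
    have hadj := hW a (by simpa using ha) b (by simpa using hb) hne
    have hA : (a : V) ∈ (s : Set V) := hWs (by simpa using ha)
    have hB : (b : V) ∈ (s : Set V) := hWs (by simpa using hb)
    simp only [f, dif_pos hA, dif_pos hB] at hfab
    have hadj' : (G.induce (s : Set V)).Adj ⟨a, hA⟩ ⟨b, hB⟩ := hadj
    exact C.valid hadj' hfab
  simpa using hle

private lemma card_le_two_mul_chi (G : SimpleGraph V) {s : Finset V}
    (h3 : ∀ a ∈ s, ∀ b ∈ s, ∀ c ∈ s, a ≠ b → a ≠ c → b ≠ c →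
      G.Adj a b ∨ G.Adj a c ∨ G.Adj b c) :
    s.card ≤ 2 * chi (G.induce (s : Set V)) := by
  classical
  obtain ⟨C⟩ := chi_colorable (G.induce (s : Set V))
  set k := chi (G.induce (s : Set V)) with hk
  have hcard : (Finset.univ : Finset ↥(s : Set V)).card ≤
      2 * ((Finset.univ : Finset ↥(s : Set V)).image C).card := by
    apply Finset.card_le_mul_card_image
    intro i _
    by_contra hgt
    have h2lt : 2 < (Finset.univ.filter fun x : ↥(s : Set V) => C x = i).card := by omega
    obtain ⟨a, b, c, ha, hb, hc, hab, hac, hbc⟩ := Finset.two_lt_card_iff.mp h2lt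
    have hCa : C a = i := (Finset.mem_filter.mp ha).2
    have hCb : C b = i := (Finset.mem_filter.mp hb).2
    have hCc : C c = i := (Finset.mem_filter.mp hc).2
    have hva : (a : V) ∈ s := a.2
    have hvb : (b : V) ∈ s := b.2
    have hvc : (c : V) ∈ s := c.2
    have hne1 : (a : V) ≠ (b : V) := fun h => hab (Subtype.ext h)
    have hne2 : (a : V) ≠ (c : V) := fun h => hac (Subtype.ext h)
    have hne3 : (b : V) ≠ (c : V) := fun h => hbc (Subtype.ext h)
    rcases h3 a hva b hvb c hvc hne1 hne2 hne3 with h | h | h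
    · exact C.valid h (by rw [hCa, hCb])
    · exact C.valid h (by rw [hCa, hCc])
    · exact C.valid h (by rw [hCb, hCc])
  have h1 : (Finset.univ : Finset ↥(s : Set V)).card = s.card := by
    rw [Finset.card_univ]
    exact Fintype.card_coe s
  have h2 : ((Finset.univ : Finset ↥(s : Set V)).image C).card ≤ k := by
    calc ((Finset.univ : Finset ↥(s : Set V)).image C).card
        ≤ (Finset.univ : Finset (Fin k)).card := Finset.card_le_card (Finset.subset_univ _)
      _ = k := by simp
  omega

private lemma inner_matching [Fintype V] [DecidableEq V] (G : SimpleGraph V) (t : Finset V) :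
    ∃ (c : V → ℕ) (U : Finset V) (m : ℕ),
      U ⊆ t ∧ (∀ u ∈ U, ∀ v ∈ U, u ≠ v → G.Adj u v) ∧ t.card = 2 * m + U.card ∧
      (∀ u ∈ t, ∀ v ∈ t, G.Adj u v → c u ≠ c v) ∧
      (∀ s ⊆ t, (s.image c).card ≤ (s ∩ U).card + m) := by
  induction t using Finset.strongInductionOn with
  | _ t ih =>
  by_cases hpair : ∃ u ∈ t, ∃ v ∈ t, u ≠ v ∧ ¬ G.Adj u v
  · obtain ⟨u, hu, v, hv, huv, hnadj⟩ := hpair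
    have hsub : ({u, v} : Finset V) ⊆ t := by
      intro x hx
      rcases Finset.mem_insert.mp hx with rfl | hx
      · exact hu
      · exact (Finset.mem_singleton.mp hx) ▸ hv
    obtain ⟨c', U, m', hUt, hUcl, hcard, hprop, hbnd⟩ :=
      ih (t \ {u, v}) (Finset.sdiff_ssubset hsub ⟨u, Finset.mem_insert_self u {v}⟩)
    refine ⟨fun w => if w = u ∨ w = v then 0 else c' w + 1, U, m' + 1,
      hUt.trans Finset.sdiff_subset, hUcl, ?_, ?_, ?_⟩
    · have h2 : ({u, v} : Finset V).card = 2 := Finset.card_pair huv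
      have h3 := Finset.card_sdiff_of_subset hsub
      have h4 := Finset.card_le_card hsub
      omega
    · intro a ha b hb hadj heq
      by_cases hau : a = u ∨ a = v <;> by_cases hbu : b = u ∨ b = v
      · rcases hau with rfl | rfl <;> rcases hbu with rfl | rfl
        · exact G.irrefl hadj
        · exact hnadj hadj
        · exact hnadj hadj.symm
        · exact G.irrefl hadj
      · simp only [if_pos hau, if_neg hbu] at heq
        exact (Nat.succ_ne_zero _) heq.symm
      · simp only [if_neg hau, if_pos hbu] at heq
        exact (Nat.succ_ne_zero _) heq
      · simp only [if_neg hau, if_neg hbu] at heq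
        push_neg at hau hbu
        refine hprop a ?_ b ?_ hadj (by omega)
        · simp [Finset.mem_sdiff, ha, hau.1, hau.2]
        · simp [Finset.mem_sdiff, hb, hbu.1, hbu.2]
    · intro s hs
      set s' := s \ {u, v} with hs'
      have himg : s.image (fun w => if w = u ∨ w = v then 0 else c' w + 1) ⊆
          insert 0 ((s'.image c').image (· + 1)) := by
        intro x hx
        obtain ⟨w, hw, rfl⟩ := Finset.mem_image.mp hx
        by_cases h : w = u ∨ w = v
        · simp [h]
        · simp only [if_neg h]
          apply Finset.mem_insert_of_mem
          push_neg at h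
          exact Finset.mem_image.mpr ⟨c' w, Finset.mem_image.mpr
            ⟨w, by simp [hs', Finset.mem_sdiff, hw, h.1, h.2], rfl⟩, rfl⟩
      have h1 : (s.image (fun w => if w = u ∨ w = v then 0 else c' w + 1)).card ≤
          1 + (s'.image c').card := by
        calc (s.image _).card ≤ (insert 0 ((s'.image c').image (· + 1))).card :=
              Finset.card_le_card himg
          _ ≤ ((s'.image c').image (· + 1)).card + 1 := Finset.card_insert_le _ _
          _ = (s'.image c').card + 1 := by
              rw [Finset.card_image_of_injective _ (add_left_injective 1)]
          _ = 1 + (s'.image c').card := by omega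
      have h2 := hbnd s' (by
        intro x hx
        simp only [hs', Finset.mem_sdiff] at hx ⊢
        exact ⟨hs hx.1, hx.2⟩)
      have h3 : (s' ∩ U).card ≤ (s ∩ U).card := Finset.card_le_card (by
        intro x hx
        simp only [hs', Finset.mem_inter, Finset.mem_sdiff] at hx ⊢
        exact ⟨hx.1.1, hx.2⟩)
      omega
  · push_neg at hpair
    refine ⟨fun v => (Fintype.equivFin V v : ℕ), t, 0, Finset.Subset.refl t, hpair,
      by omega, ?_, ?_⟩
    · intro a _ b _ hadj heq
      exact G.ne_of_adj hadj ((Fintype.equivFin V).injective (Fin.val_injective heq))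
    · intro s hs
      have h1 : (s.image fun v => ((Fintype.equivFin V) v : ℕ)).card ≤ s.card :=
        Finset.card_image_le
      have h2 : s ∩ t = s := Finset.inter_eq_left.mpr hs
      rw [h2]
      omega

private lemma outer_coloring [Fintype V] [DecidableEq V] (G : SimpleGraph V) (t : Finset V) :
    ∃ c : V → ℕ, (∀ u ∈ t, ∀ v ∈ t, G.Adj u v → c u ≠ c v) ∧
      ∀ s ⊆ t, 3 * (s.image c).card ≤ 3 * chi (G.induce (s : Set V)) + t.card := by
  induction t using Finset.strongInductionOn with
  | _ t ih =>
  by_cases hI : ∃ I : Finset V, I ⊆ t ∧ I.card = 3 ∧ ∀ x ∈ I, ∀ y ∈ I, ¬ G.Adj x y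
  · obtain ⟨I, hIt, hI3, hInd⟩ := hI
    obtain ⟨c', hprop, hbnd⟩ := ih (t \ I)
      (Finset.sdiff_ssubset hIt (Finset.card_pos.mp (by omega)))
    refine ⟨fun w => if w ∈ I then 0 else c' w + 1, ?_, ?_⟩
    · intro a ha b hb hadj heq
      by_cases haI : a ∈ I <;> by_cases hbI : b ∈ I
      · exact hInd a haI b hbI hadj
      · simp only [if_pos haI, if_neg hbI] at heq
        exact (Nat.succ_ne_zero _) heq.symm
      · simp only [if_neg haI, if_pos hbI] at heq
        exact (Nat.succ_ne_zero _) heq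
      · simp only [if_neg haI, if_neg hbI] at heq
        refine hprop a ?_ b ?_ hadj (by omega)
        · exact Finset.mem_sdiff.mpr ⟨ha, haI⟩
        · exact Finset.mem_sdiff.mpr ⟨hb, hbI⟩
    · intro s hs
      set s' := s \ I with hs'
      have himg : s.image (fun w => if w ∈ I then 0 else c' w + 1) ⊆
          insert 0 ((s'.image c').image (· + 1)) := by
        intro x hx
        obtain ⟨w, hw, rfl⟩ := Finset.mem_image.mp hx
        by_cases h : w ∈ I
        · simp [h]
        · simp only [if_neg h]
          apply Finset.mem_insert_of_mem
          exact Finset.mem_image.mpr ⟨c' w, Finset.mem_image.mpr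
            ⟨w, Finset.mem_sdiff.mpr ⟨hw, h⟩, rfl⟩, rfl⟩
      have h1 : (s.image (fun w => if w ∈ I then 0 else c' w + 1)).card ≤
          1 + (s'.image c').card := by
        calc (s.image _).card ≤ (insert 0 ((s'.image c').image (· + 1))).card :=
              Finset.card_le_card himg
          _ ≤ ((s'.image c').image (· + 1)).card + 1 := Finset.card_insert_le _ _
          _ = (s'.image c').card + 1 := by
              rw [Finset.card_image_of_injective _ (add_left_injective 1)]
          _ = 1 + (s'.image c').card := by omega
      have h2 := hbnd s' (by
        intro x hx
        simp only [hs', Finset.mem_sdiff] at hx ⊢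
        exact ⟨hs hx.1, hx.2⟩)
      have hmono : chi (G.induce (s' : Set V)) ≤ chi (G.induce (s : Set V)) :=
        chi_mono G (hs' ▸ Finset.sdiff_subset)
      have h4 : (t \ I).card = t.card - 3 := by rw [Finset.card_sdiff_of_subset hIt, hI3]
      have h5 : 3 ≤ t.card := hI3 ▸ Finset.card_le_card hIt
      omega
  · push_neg at hI
    have h3 : ∀ a ∈ t, ∀ b ∈ t, ∀ d ∈ t, a ≠ b → a ≠ d → b ≠ d →
        G.Adj a b ∨ G.Adj a d ∨ G.Adj b d := by
      intro a ha b hb d hd hab had hbd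
      by_contra hcon
      push_neg at hcon
      obtain ⟨n1, n2, n3⟩ := hcon
      have hsub : ({a, b, d} : Finset V) ⊆ t := by
        intro x hx
        simp only [Finset.mem_insert, Finset.mem_singleton] at hx
        rcases hx with rfl | rfl | rfl <;> assumption
      have hc3 : ({a, b, d} : Finset V).card = 3 := by
        rw [Finset.card_insert_of_notMem (by simp [hab, had]),
          Finset.card_insert_of_notMem (by simp [hbd]), Finset.card_singleton]
      obtain ⟨x, hx, y, hy, hxy⟩ := hI {a, b, d} hsub hc3
      simp only [Finset.mem_insert, Finset.mem_singleton] at hx hy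
      rcases hx with rfl | rfl | rfl <;> rcases hy with rfl | rfl | rfl <;>
        first
          | exact G.irrefl hxy
          | exact n1 hxy
          | exact n2 hxy
          | exact n3 hxy
          | exact n1 hxy.symm
          | exact n2 hxy.symm
          | exact n3 hxy.symm
    obtain ⟨c, U, m, hUt, hUcl, hcard, hprop, hbnd⟩ := inner_matching G t
    refine ⟨c, hprop, ?_⟩
    intro s hs
    have hq := hbnd s hs
    have hK : (s ∩ U).card ≤ chi (G.induce (s : Set V)) :=
      clique_le_chi G Finset.inter_subset_left
        (fun u hu v hv huv => hUcl u (Finset.mem_of_mem_inter_right hu) v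
          (Finset.mem_of_mem_inter_right hv) huv)
    have hs2 : s.card ≤ 2 * chi (G.induce (s : Set V)) :=
      card_le_two_mul_chi G (fun a ha b hb d hd =>
        h3 a (hs ha) b (hs hb) d (hs hd))
    have himg_le : (s.image c).card ≤ s.card := Finset.card_image_le
    have hKU : (s ∩ U).card ≤ U.card := Finset.card_le_card Finset.inter_subset_right
    omega

end Aux

theorem stmt7 {V : Type*} [Fintype V] (G : SimpleGraph V) :
    (phi G : ℝ) ≤ (Fintype.card V : ℝ) / 3 := by
  classical
  obtain ⟨c, hprop, hbnd⟩ := outer_coloring G Finset.univ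
  have hproper : IsProper G c := fun u v h =>
    hprop u (Finset.mem_univ u) v (Finset.mem_univ v) h
  have hphiC : phiC G c ≤ Fintype.card V / 3 := by
    apply Finset.sup_le
    intro s _
    have hb := hbnd s (Finset.subset_univ s)
    rw [Finset.card_univ] at hb
    rw [Nat.le_div_iff_mul_le (by norm_num)]
    unfold disc
    omega
  have hphi : phi G ≤ Fintype.card V / 3 :=
    le_trans (Nat.sInf_le ⟨c, hproper, rfl⟩) hphiC
  have h3 : phi G * 3 ≤ Fintype.card V :=
    le_trans (Nat.mul_le_mul_right 3 hphi) (Nat.div_mul_le_self _ 3)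
  rw [le_div_iff₀ (by norm_num : (0:ℝ) < 3)]
  exact_mod_cast h3
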